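/- arXiv:2106.11898 — 3 statements merged into one kernel-verified Lean document; each statement's English description precedes it below -/
import Mathlib

section
/- Convergence criterion for motivic Euler products (Proposition 4.7.2.1-type criterion, Proposition "linear-conv-criterion" of the paper, stated with the defining properties of the weight as hypotheses): Fix an integer r ≥ 1, a tuple ρ ∈ (ℤ_{≥1})^r, a natural number M, and real numbers w₀ ≥ 0, ε > 0, α < 1 and β ≥ 0. Let (w_i)_{i ∈ ℕ^r∖{0}} be real numbers such that w_i ≤ (⟨ρ,i⟩ − 1/2 − ε)·w₀ whenever 1 ≤ ⟨ρ,i⟩ ≤ M, and w_i ≤ (α·⟨ρ,i⟩ + β − 1/2)·w₀ whenever ⟨ρ,i⟩ > M. Suppose (b_m)_{m ∈ ℕ^r∖{0}} is a family in R such that every b_m is a finite sum b_m = Σ_π s_π over the partitions π of m, where each s_π ∈ R satisfies w(s_π) ≤ Σ_i π(i)·w_i + (1/2)·(Σ_i π(i))·w₀. Then there exist δ ∈ (0, 1/2] and δ' > 0 such that for every m ∈ ℕ^r∖{0} and all elements a₁, …, a_r ∈ R with w(a_k) < −w₀·(1 − δ + β/(M+1)) for k = 1, …, r, one has w(b_m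 · a₁^{ρ₁ m₁} ⋯ a_r^{ρ_r m_r}) ≤ −δ'·⟨ρ, m⟩. -/
open Finset

/-- The weight function, viewed with values in `ℝ ∪ {-∞}`. -/
noncomputable def weightR {R : Type*} (w : R → WithBot ℤ) (x : R) : WithBot ℝ :=
  (w x).map (fun n : ℤ => (n : ℝ))

/-- The pairing `⟨ρ, m⟩ = ∑ α, ρ α * m α`. -/
def pairing {r : ℕ} (ρ m : Fin r → ℕ) : ℕ := ∑ α, ρ α * m α

/-- `π` is a partition of `m ∈ ℕ^r ∖ {0}`: a finitely supported function on
`ℕ^r ∖ {0}` with `∑ i, π i • i = m`. -/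
def IsPartitionOf {r : ℕ} (π : (Fin r → ℕ) →₀ ℕ) (m : Fin r → ℕ) : Prop :=
  π 0 = 0 ∧ (π.sum fun i n => n • i) = m

lemma wmap_mono : ∀ {u v : WithBot ℤ}, u ≤ v →
    u.map (fun n : ℤ => (n : ℝ)) ≤ v.map (fun n : ℤ => (n : ℝ)) := by
  intro u v h
  cases u with
  | bot => simp
  | coe x =>
    cases v with
    | bot => simp at h
    | coe y =>
      simp only [WithBot.map_coe, WithBot.coe_le_coe] at *
      exact_mod_cast h

lemma wmap_add (u v : WithBot ℤ) :
    (u + v).map (fun n : ℤ => (n : ℝ)) =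
      u.map (fun n : ℤ => (n : ℝ)) + v.map (fun n : ℤ => (n : ℝ)) := by
  cases u <;> cases v <;> simp [WithBot.map_coe, ← WithBot.coe_add]

section
variable {R : Type*} [CommRing R] (w : R → WithBot ℤ)

lemma wR_mul_le (hwmul : ∀ x y : R, w (x * y) ≤ w x + w y) (x y : R) :
    weightR w (x * y) ≤ weightR w x + weightR w y := by
  refine le_trans (wmap_mono (hwmul x y)) ?_
  rw [wmap_add]
  exact le_rfl

lemma wR_add_le (hwadd : ∀ x y : R, w (x + y) ≤ max (w x) (w y)) (x y : R) :
    weightR w (x + y) ≤ max (weightR w x) (weightR w y) := by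
  refine le_trans (wmap_mono (hwadd x y)) ?_
  rcases max_cases (w x) (w y) with ⟨h, _⟩ | ⟨h, _⟩ <;> rw [h]
  · exact le_max_left _ _
  · exact le_max_right _ _

lemma wR_sum_le (hw0 : w 0 = ⊥) (hwadd : ∀ x y : R, w (x + y) ≤ max (w x) (w y))
    {ι : Type*} (P : Finset ι) (f : ι → R) (c : WithBot ℝ)
    (h : ∀ i ∈ P, weightR w (f i) ≤ c) :
    weightR w (∑ i ∈ P, f i) ≤ c := by
  induction P using Finset.cons_induction with
  | empty => simp [weightR, hw0]
  | cons i P hi ih =>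
    rw [Finset.sum_cons]
    refine le_trans (wR_add_le w hwadd _ _) (max_le (h i (Finset.mem_cons_self i P)) ?_)
    exact ih fun j hj => h j (Finset.mem_cons_of_mem hj)

lemma wR_mul_pow_le (hwmul : ∀ x y : R, w (x * y) ≤ w x + w y)
    (x : R) (c : ℝ) (hx : weightR w x ≤ (c : WithBot ℝ)) :
    ∀ (n : ℕ) (t : R), weightR w (t * x ^ n) ≤ weightR w t + (((n : ℝ) * c : ℝ) : WithBot ℝ) := by
  intro n
  induction n with
  | zero => intro t; simp
  | succ n ih =>
    intro t
    have h1 : t * x ^ (n + 1) = (t * x) * x ^ n := by ring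
    rw [h1]
    calc weightR w ((t * x) * x ^ n) ≤ weightR w (t * x) + (((n : ℝ) * c : ℝ) : WithBot ℝ) := ih _
    _ ≤ (weightR w t + weightR w x) + (((n : ℝ) * c : ℝ) : WithBot ℝ) :=
        add_le_add_left (wR_mul_le w hwmul t x) _
    _ ≤ (weightR w t + (c : WithBot ℝ)) + (((n : ℝ) * c : ℝ) : WithBot ℝ) :=
        add_le_add_left (add_le_add_right hx _) _
    _ = weightR w t + ((((n + 1 : ℕ) : ℝ) * c : ℝ) : WithBot ℝ) := by
        rw [add_assoc, ← WithBot.coe_add,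
          show c + (n : ℝ) * c = ((n + 1 : ℕ) : ℝ) * c by push_cast; ring]

lemma wR_mul_prod_le (hwmul : ∀ x y : R, w (x * y) ≤ w x + w y)
    {r : ℕ} (x : Fin r → R) (e : Fin r → ℕ) (c : ℝ)
    (hx : ∀ k, weightR w (x k) ≤ (c : WithBot ℝ)) (t : R) :
    weightR w (t * ∏ k, x k ^ e k) ≤
      weightR w t + (((∑ k, (e k : ℝ)) * c : ℝ) : WithBot ℝ) := by
  classical
  have key : ∀ S : Finset (Fin r), ∀ t : R,
      weightR w (t * ∏ k ∈ S, x k ^ e k) ≤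
        weightR w t + (((∑ k ∈ S, (e k : ℝ)) * c : ℝ) : WithBot ℝ) := by
    intro S
    induction S using Finset.cons_induction with
    | empty => intro t; simp
    | cons i S hi ih =>
      intro t
      rw [Finset.prod_cons, show t * (x i ^ e i * ∏ k ∈ S, x k ^ e k)
          = (t * x i ^ e i) * ∏ k ∈ S, x k ^ e k by ring]
      calc weightR w ((t * x i ^ e i) * ∏ k ∈ S, x k ^ e k)
          ≤ weightR w (t * x i ^ e i) + (((∑ k ∈ S, (e k : ℝ)) * c : ℝ) : WithBot ℝ) := ih _
        _ ≤ (weightR w t + (((e i : ℝ) * c : ℝ) : WithBot ℝ))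
              + (((∑ k ∈ S, (e k : ℝ)) * c : ℝ) : WithBot ℝ) :=
            add_le_add_left (wR_mul_pow_le w hwmul (x i) c (hx i) (e i) t) _
        _ = weightR w t + (((∑ k ∈ Finset.cons i S hi, (e k : ℝ)) * c : ℝ) : WithBot ℝ) := by
            rw [add_assoc, ← WithBot.coe_add, Finset.sum_cons,
              show (e i : ℝ) * c + (∑ k ∈ S, (e k : ℝ)) * c
                = ((e i : ℝ) + ∑ k ∈ S, (e k : ℝ)) * c by ring]
  exact key Finset.univ t

end

lemma pairing_pos {r : ℕ} (ρ : Fin r → ℕ) (hρ : ∀ α, 1 ≤ ρ α)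
    (i : Fin r → ℕ) (hi : i ≠ 0) : 1 ≤ pairing ρ i := by
  obtain ⟨α, hα⟩ := Function.ne_iff.mp hi
  have h1 : 1 ≤ i α := Nat.pos_of_ne_zero hα
  calc 1 = 1 * 1 := by ring
    _ ≤ ρ α * i α := Nat.mul_le_mul (hρ α) h1
    _ ≤ pairing ρ i := by
        unfold pairing
        exact Finset.single_le_sum (f := fun β => ρ β * i β)
          (fun β _ => Nat.zero_le _) (Finset.mem_univ α)

lemma pairing_of_partition {r : ℕ} (ρ : Fin r → ℕ) {π : (Fin r → ℕ) →₀ ℕ}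
    {m : Fin r → ℕ} (hπ : IsPartitionOf π m) :
    pairing ρ m = ∑ i ∈ π.support, π i * pairing ρ i := by
  have hm' : ∀ α, m α = ∑ i ∈ π.support, π i * i α := by
    intro α
    rw [← hπ.2, Finsupp.sum]
    rw [Finset.sum_apply]
    simp [smul_eq_mul]
  unfold pairing
  simp_rw [hm', Finset.mul_sum]
  rw [Finset.sum_comm]
  refine Finset.sum_congr rfl fun i _ => ?_
  exact Finset.sum_congr rfl fun α _ => by ring

theorem euler_product_weight_linear_convergence_criterion
    {R : Type*} [CommRing R] (w : R → WithBot ℤ)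
    (hw0 : w 0 = ⊥)
    (hwadd : ∀ x y : R, w (x + y) ≤ max (w x) (w y))
    (hwmul : ∀ x y : R, w (x * y) ≤ w x + w y)
    (r : ℕ) (hr : 1 ≤ r) (ρ : Fin r → ℕ) (hρ : ∀ α, 1 ≤ ρ α)
    (M : ℕ) (w₀ ε a β : ℝ)
    (hw₀ : 0 ≤ w₀) (hε : 0 < ε) (ha : a < 1) (hβ : 0 ≤ β)
    (wi : (Fin r → ℕ) → ℝ)
    (hwi₁ : ∀ i : Fin r → ℕ, i ≠ 0 → 1 ≤ pairing ρ i → pairing ρ i ≤ M →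
      wi i ≤ ((pairing ρ i : ℝ) - 1 / 2 - ε) * w₀)
    (hwi₂ : ∀ i : Fin r → ℕ, i ≠ 0 → M < pairing ρ i →
      wi i ≤ (a * (pairing ρ i : ℝ) + β - 1 / 2) * w₀)
    (b : (Fin r → ℕ) → R)
    (hb : ∀ m : Fin r → ℕ, m ≠ 0 →
      ∃ (P : Finset ((Fin r → ℕ) →₀ ℕ)) (s : ((Fin r → ℕ) →₀ ℕ) → R),
        (∀ π ∈ P, IsPartitionOf π m) ∧
        b m = ∑ π ∈ P, s π ∧
        ∀ π ∈ P, weightR w (s π) ≤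
          (((π.sum fun i n => (n : ℝ) * wi i)
            + 1 / 2 * (π.sum fun _ n => (n : ℝ)) * w₀ : ℝ) : WithBot ℝ)) :
    ∃ δ δ' : ℝ, 0 < δ ∧ δ ≤ 1 / 2 ∧ 0 < δ' ∧
      ∀ m : Fin r → ℕ, m ≠ 0 → ∀ A : Fin r → R,
        (∀ k, weightR w (A k) <
          ((-(w₀ * (1 - δ + β / (M + 1))) : ℝ) : WithBot ℝ)) →
        weightR w (b m * ∏ k, A k ^ (ρ k * m k)) ≤
          ((-(δ' * (pairing ρ m : ℝ)) : ℝ) : WithBot ℝ) := by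
  classical
  obtain ⟨δ, hδdef⟩ : ∃ x : ℝ, x = min (1 / 2) (min (ε / ((M : ℝ) + 1)) (1 - a)) := ⟨_, rfl⟩
  have hM1 : (0 : ℝ) < (M : ℝ) + 1 := by positivity
  have hδpos : 0 < δ := by
    rw [hδdef]
    apply lt_min (by norm_num)
    exact lt_min (by positivity) (by linarith)
  have hδhalf : δ ≤ 1 / 2 := by rw [hδdef]; exact min_le_left _ _
  have hδε : δ ≤ ε / ((M : ℝ) + 1) := by
    rw [hδdef]; exact le_trans (min_le_right _ _) (min_le_left _ _)
  have hδa : δ ≤ 1 - a := by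
    rw [hδdef]; exact le_trans (min_le_right _ _) (min_le_right _ _)
  obtain ⟨C, hCdef⟩ : ∃ x : ℝ, x = w₀ * (1 - δ + β / ((M : ℝ) + 1)) := ⟨_, rfl⟩
  have hC0 : 0 ≤ C := by
    rw [hCdef]
    apply mul_nonneg hw₀
    have h1 : 0 ≤ β / ((M : ℝ) + 1) := by positivity
    linarith
  obtain ⟨K, hKdef⟩ : ∃ x : ℤ, x = ⌈-C⌉ - 1 := ⟨_, rfl⟩
  obtain ⟨γ, hγdef⟩ : ∃ x : ℝ, x = -C - (K : ℝ) := ⟨_, rfl⟩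
  have hγpos : 0 < γ := by
    have h := Int.ceil_lt_add_one (-C)
    rw [hγdef, hKdef]
    push_cast
    linarith
  have hKγ : (K : ℝ) = -C - γ := by rw [hγdef]; ring
  refine ⟨δ, γ, hδpos, hδhalf, hγpos, ?_⟩
  intro m hm A hA
  obtain ⟨P, s, hPpart, hbm, hs⟩ := hb m hm
  have hAK : ∀ k, weightR w (A k) ≤ ((K : ℝ) : WithBot ℝ) := by
    intro k
    have h := hA k
    rw [show -(w₀ * (1 - δ + β / ((M : ℕ) + (1 : ℝ)))) = -C by rw [hCdef]] at h
    unfold weightR at h ⊢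
    cases hw : w (A k) with
    | bot => simp
    | coe z =>
      rw [hw, WithBot.map_coe, WithBot.coe_lt_coe] at h
      rw [WithBot.map_coe, WithBot.coe_le_coe]
      have hz : z < ⌈-C⌉ := Int.lt_ceil.mpr h
      have hzK : z ≤ K := by omega
      exact_mod_cast hzK
  rw [hbm, Finset.sum_mul]
  apply wR_sum_le w hw0 hwadd
  intro π hπ
  have hpart := hPpart π hπ
  obtain ⟨n, hn⟩ : ∃ x : ℕ, x = pairing ρ m := ⟨_, rfl⟩
  rw [← hn]
  have hnsum : (n : ℝ) = ∑ i ∈ π.support, (π i : ℝ) * (pairing ρ i : ℝ) := by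
    rw [hn, pairing_of_partition ρ hpart]
    push_cast
    rfl
  have hpartbd : ∀ i ∈ π.support, wi i + w₀ / 2 ≤ (pairing ρ i : ℝ) * C := by
    intro i hi
    have hine : π i ≠ 0 := Finsupp.mem_support_iff.mp hi
    have hi0 : i ≠ 0 := by rintro rfl; exact hine hpart.1
    have hp1 : 1 ≤ pairing ρ i := pairing_pos ρ hρ i hi0
    have hp1' : (1 : ℝ) ≤ (pairing ρ i : ℝ) := by exact_mod_cast hp1
    rcases le_or_gt (pairing ρ i) M with hle | hgt
    · have h1 := hwi₁ i hi0 hp1 hle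
      have hpM : (pairing ρ i : ℝ) ≤ (M : ℝ) + 1 := by
        have : (pairing ρ i : ℝ) ≤ (M : ℝ) := by exact_mod_cast hle
        linarith
      have hpδ : (pairing ρ i : ℝ) * δ ≤ ε := by
        calc (pairing ρ i : ℝ) * δ ≤ ((M : ℝ) + 1) * δ := by nlinarith
          _ ≤ ((M : ℝ) + 1) * (ε / ((M : ℝ) + 1)) := by nlinarith
          _ = ε := by field_simp
      have e1 : ((pairing ρ i : ℝ) - ε) * w₀
          ≤ ((pairing ρ i : ℝ) - (pairing ρ i : ℝ) * δ) * w₀ :=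
        mul_le_mul_of_nonneg_right (by linarith) hw₀
      have e2 : 0 ≤ (pairing ρ i : ℝ) * w₀ * (β / ((M : ℝ) + 1)) := by positivity
      rw [hCdef]
      calc wi i + w₀ / 2 ≤ ((pairing ρ i : ℝ) - ε) * w₀ := by linarith
        _ ≤ ((pairing ρ i : ℝ) - (pairing ρ i : ℝ) * δ) * w₀ := e1
        _ = (pairing ρ i : ℝ) * (w₀ * (1 - δ)) := by ring
        _ ≤ (pairing ρ i : ℝ) * (w₀ * (1 - δ + β / ((M : ℝ) + 1))) := by linarith
    · have h1 := hwi₂ i hi0 hgt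
      have hpM : (M : ℝ) + 1 ≤ (pairing ρ i : ℝ) := by exact_mod_cast hgt
      have e2 : β ≤ (pairing ρ i : ℝ) * (β / ((M : ℝ) + 1)) := by
        have h3 := mul_le_mul_of_nonneg_right hpM
          (show 0 ≤ β / ((M : ℝ) + 1) by positivity)
        have h4 : ((M : ℝ) + 1) * (β / ((M : ℝ) + 1)) = β := by field_simp
        linarith
      have e1 : a * (pairing ρ i : ℝ) ≤ (1 - δ) * (pairing ρ i : ℝ) :=
        mul_le_mul_of_nonneg_right (by linarith) (by linarith)
      have e3 : (a * (pairing ρ i : ℝ) + β) * w₀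
          ≤ ((1 - δ) * (pairing ρ i : ℝ) + (pairing ρ i : ℝ) * (β / ((M : ℝ) + 1))) * w₀ :=
        mul_le_mul_of_nonneg_right (by linarith) hw₀
      rw [hCdef]
      calc wi i + w₀ / 2 ≤ (a * (pairing ρ i : ℝ) + β) * w₀ := by linarith
        _ ≤ ((1 - δ) * (pairing ρ i : ℝ)
              + (pairing ρ i : ℝ) * (β / ((M : ℝ) + 1))) * w₀ := e3
        _ = (pairing ρ i : ℝ) * (w₀ * (1 - δ + β / ((M : ℝ) + 1))) := by ring
  have hWle : (π.sum fun i n => (n : ℝ) * wi i)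
      + 1 / 2 * (π.sum fun _ n => (n : ℝ)) * w₀ ≤ C * (n : ℝ) := by
    rw [Finsupp.sum, Finsupp.sum]
    have h1 : (∑ i ∈ π.support, (π i : ℝ) * wi i)
        + 1 / 2 * (∑ i ∈ π.support, (π i : ℝ)) * w₀
        = ∑ i ∈ π.support, (π i : ℝ) * (wi i + w₀ / 2) := by
      rw [Finset.mul_sum, Finset.sum_mul, ← Finset.sum_add_distrib]
      exact Finset.sum_congr rfl fun i _ => by ring
    rw [h1, hnsum, Finset.mul_sum]
    refine Finset.sum_le_sum fun i hi => ?_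
    calc (π i : ℝ) * (wi i + w₀ / 2) ≤ (π i : ℝ) * ((pairing ρ i : ℝ) * C) :=
          mul_le_mul_of_nonneg_left (hpartbd i hi) (by positivity)
      _ = C * ((π i : ℝ) * (pairing ρ i : ℝ)) := by ring
  have hsumE : (∑ k, ((ρ k * m k : ℕ) : ℝ)) = (n : ℝ) := by
    rw [hn]
    unfold pairing
    push_cast
    rfl
  have hprod := wR_mul_prod_le w hwmul A (fun k => ρ k * m k) (K : ℝ) hAK (s π)
  rw [hsumE] at hprod
  calc weightR w (s π * ∏ k, A k ^ (ρ k * m k))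
      ≤ weightR w (s π) + (((n : ℝ) * (K : ℝ) : ℝ) : WithBot ℝ) := hprod
    _ ≤ ((((π.sum fun i n => (n : ℝ) * wi i)
          + 1 / 2 * (π.sum fun _ n => (n : ℝ)) * w₀ : ℝ)) : WithBot ℝ)
          + (((n : ℝ) * (K : ℝ) : ℝ) : WithBot ℝ) := add_le_add_left (hs π hπ) _
    _ = ((((π.sum fun i n => (n : ℝ) * wi i)
          + 1 / 2 * (π.sum fun _ n => (n : ℝ)) * w₀ + (n : ℝ) * (K : ℝ) : ℝ)) : WithBot ℝ) :=
        (WithBot.coe_add _ _).symm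
    _ ≤ ((-(γ * (n : ℝ)) : ℝ) : WithBot ℝ) := by
        rw [WithBot.coe_le_coe, hKγ]
        linarith [hWle]
end

section
/- Stability of weight-linear convergence under Cauchy products (Lemma "weight-convergence-product-stability" of the paper, in normalized form): Fix an integer r ≥ 1 and ρ ∈ (ℤ_{≥1})^r. Let (p_m)_{m∈ℕ^r} and (q_m)_{m∈ℕ^r} be families in R that both converge ρ-weight-linearly: there exist δ, δ' > 0 and i₀, i₀' ∈ ℕ such that w(p_m) < −δ·⟨ρ,m⟩ whenever ⟨ρ,m⟩ ≥ i₀, and w(q_m) < −δ'·⟨ρ,m⟩ whenever ⟨ρ,m⟩ ≥ i₀'. Define the convolution r_m = Σ_{m' ≤ m} p_{m'}·q_{m−m'}. Then (r_m) converges ρ-weight-linearly: there exists j₀ ∈ ℕ such that w(r_m) < −(min(δ, δ')/2)·⟨ρ,m⟩ for every m ∈ ℕ^r with ⟨ρ,m⟩ ≥ j₀. -/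
open Finset

lemma castmap_mono : Monotone (WithBot.map (fun n : ℤ => (n : ℝ))) :=
  WithBot.monotone_map_iff.mpr (fun a b h => by exact_mod_cast h)

lemma castmap_max (a b : WithBot ℤ) :
    (max a b).map (fun n : ℤ => (n : ℝ)) =
      max (a.map (fun n : ℤ => (n : ℝ))) (b.map (fun n : ℤ => (n : ℝ))) := by
  rcases le_total a b with h | h
  · rw [max_eq_right h, max_eq_right (castmap_mono h)]
  · rw [max_eq_left h, max_eq_left (castmap_mono h)]

lemma castmap_add (a b : WithBot ℤ) :
    (a + b).map (fun n : ℤ => (n : ℝ)) =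
      a.map (fun n : ℤ => (n : ℝ)) + b.map (fun n : ℤ => (n : ℝ)) := by
  induction a using WithBot.recBotCoe with
  | bot => simp
  | coe a =>
    induction b using WithBot.recBotCoe with
    | bot => simp
    | coe b => simp [← WithBot.coe_add]

lemma wb_add_lt_add_of_lt_of_le {u v : WithBot ℝ} {a b : ℝ}
    (hu : u < (a : WithBot ℝ)) (hv : v ≤ (b : WithBot ℝ)) :
    u + v < ((a + b : ℝ) : WithBot ℝ) := by
  induction u using WithBot.recBotCoe with
  | bot => simpa using WithBot.bot_lt_coe (a+b)
  | coe u =>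
    induction v using WithBot.recBotCoe with
    | bot => simpa using WithBot.bot_lt_coe (a+b)
    | coe v =>
      rw [← WithBot.coe_add, WithBot.coe_lt_coe] at *
      rw [WithBot.coe_le_coe] at hv
      linarith


theorem weight_linear_convergence_stable_under_cauchy_product
    {R : Type*} [CommRing R] (w : R → WithBot ℤ)
    (hw0 : w 0 = ⊥)
    (hwadd : ∀ x y : R, w (x + y) ≤ max (w x) (w y))
    (hwmul : ∀ x y : R, w (x * y) ≤ w x + w y)
    (r : ℕ) (hr : 1 ≤ r) (ρ : Fin r → ℕ) (hρ : ∀ α, 1 ≤ ρ α)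
    (p q : (Fin r → ℕ) → R)
    (δ δ' : ℝ) (hδ : 0 < δ) (hδ' : 0 < δ')
    (i₀ i₀' : ℕ)
    (hp : ∀ m : Fin r → ℕ, i₀ ≤ pairing ρ m →
      weightR w (p m) < ((-(δ * (pairing ρ m : ℝ)) : ℝ) : WithBot ℝ))
    (hq : ∀ m : Fin r → ℕ, i₀' ≤ pairing ρ m →
      weightR w (q m) < ((-(δ' * (pairing ρ m : ℝ)) : ℝ) : WithBot ℝ)) :
    ∃ j₀ : ℕ, ∀ m : Fin r → ℕ, j₀ ≤ pairing ρ m →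
      weightR w (∑ m' ∈ Finset.Iic m, p m' * q (m - m')) <
        ((-(min δ δ' / 2 * (pairing ρ m : ℝ)) : ℝ) : WithBot ℝ) := by
  set δ₀ := min δ δ' with hδ₀def
  have hδ₀ : 0 < δ₀ := lt_min hδ hδ'
  have hδ₀δ : δ₀ ≤ δ := min_le_left _ _
  have hδ₀δ' : δ₀ ≤ δ' := min_le_right _ _
  have Wmul : ∀ x y : R, weightR w (x * y) ≤ weightR w x + weightR w y := by
    intro x y
    rw [weightR, weightR, weightR, ← castmap_add]
    exact castmap_mono (hwmul x y)
  have Wsum : ∀ (s : Finset (Fin r → ℕ)) (f : (Fin r → ℕ) → R) (c : ℝ),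
      (∀ i ∈ s, weightR w (f i) < (c : WithBot ℝ)) →
      weightR w (∑ i ∈ s, f i) < (c : WithBot ℝ) := by
    intro s f c
    induction s using Finset.cons_induction with
    | empty => intro _; rw [Finset.sum_empty, weightR, hw0]; exact WithBot.bot_lt_coe c
    | cons a s ha ih =>
      intro h
      rw [Finset.sum_cons]
      have h1 : weightR w (f a + ∑ i ∈ s, f i) ≤
          max (weightR w (f a)) (weightR w (∑ i ∈ s, f i)) := by
        rw [weightR, weightR, weightR, ← castmap_max]
        exact castmap_mono (hwadd _ _)
      exact lt_of_le_of_lt h1 (max_lt (h a (Finset.mem_cons_self _ _))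
        (ih fun i hi => h i (Finset.mem_cons_of_mem hi)))
  have hcomp : ∀ (m : Fin r → ℕ) (α : Fin r), m α ≤ pairing ρ m := by
    intro m α
    rw [pairing]
    calc m α ≤ ρ α * m α := Nat.le_mul_of_pos_left _ (hρ α)
    _ ≤ ∑ β, ρ β * m β := Finset.single_le_sum (f := fun β => ρ β * m β) (fun i _ => Nat.zero_le _) (Finset.mem_univ α)
  obtain ⟨A, hAq⟩ : ∃ A : ℝ, ∀ m'' ∈ Finset.Iic (fun _ => max i₀ i₀' : Fin r → ℕ),
      weightR w (q m'') ≤ (A : WithBot ℝ) :=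
    ⟨WithBot.unbotD 0 ((Finset.Iic (fun _ => max i₀ i₀' : Fin r → ℕ)).sup (fun m'' => weightR w (q m''))),
      fun m'' h => le_trans (Finset.le_sup (f := fun m'' => weightR w (q m'')) h) (WithBot.le_coe_unbotD _ 0)⟩
  obtain ⟨A', hAp⟩ : ∃ A' : ℝ, ∀ m'' ∈ Finset.Iic (fun _ => max i₀ i₀' : Fin r → ℕ),
      weightR w (p m'') ≤ (A' : WithBot ℝ) :=
    ⟨WithBot.unbotD 0 ((Finset.Iic (fun _ => max i₀ i₀' : Fin r → ℕ)).sup (fun m'' => weightR w (p m''))),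
      fun m'' h => le_trans (Finset.le_sup (f := fun m'' => weightR w (p m'')) h) (WithBot.le_coe_unbotD _ 0)⟩
  have hqA : ∀ m'', pairing ρ m'' < i₀' → weightR w (q m'') ≤ (A : WithBot ℝ) := by
    intro m'' hm
    refine hAq m'' (Finset.mem_Iic.mpr (fun α => ?_))
    exact le_trans (le_of_lt (lt_of_le_of_lt (hcomp m'' α) hm)) (le_max_right _ _)
  have hpA' : ∀ m'', pairing ρ m'' < i₀ → weightR w (p m'') ≤ (A' : WithBot ℝ) := by
    intro m'' hm
    refine hAp m'' (Finset.mem_Iic.mpr (fun α => ?_))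
    exact le_trans (le_of_lt (lt_of_le_of_lt (hcomp m'' α) hm)) (le_max_left _ _)
  obtain ⟨K, hK⟩ := exists_nat_gt (max (A + δ * i₀') (A' + δ' * i₀) * 2 / δ₀)
  have hK' : max (A + δ * i₀') (A' + δ' * i₀) * 2 < K * δ₀ :=
    (div_lt_iff₀ hδ₀).mp hK
  have hK2 : A + δ * i₀' < δ₀ / 2 * K := by
    have := le_max_left (A + δ * i₀') (A' + δ' * i₀)
    nlinarith
  have hK3 : A' + δ' * i₀ < δ₀ / 2 * K := by
    have := le_max_right (A + δ * i₀') (A' + δ' * i₀)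
    nlinarith
  refine ⟨i₀ + i₀' + K, fun m hm => ?_⟩
  set N := pairing ρ m with hN
  refine Wsum _ _ _ (fun m' hm' => ?_)
  have hle : m' ≤ m := Finset.mem_Iic.mp hm'
  have hsplit : pairing ρ m' + pairing ρ (m - m') = N := by
    rw [hN, pairing, pairing, pairing, ← Finset.sum_add_distrib]
    refine Finset.sum_congr rfl (fun α _ => ?_)
    rw [← Nat.mul_add, Pi.sub_apply, Nat.add_sub_cancel' (hle α)]
  set n1 := pairing ρ m' with hn1
  set n2 := pairing ρ (m - m') with hn2
  have hNK : K ≤ N := by omega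
  refine lt_of_le_of_lt (Wmul _ _) ?_
  by_cases h2 : i₀' ≤ n2
  · by_cases h1 : i₀ ≤ n1
    · refine lt_of_lt_of_le (wb_add_lt_add_of_lt_of_le (hp m' h1) (le_of_lt (hq _ h2))) ?_
      rw [WithBot.coe_le_coe]
      have hc : (n1 : ℝ) + (n2 : ℝ) = (N : ℝ) := by exact_mod_cast congrArg Nat.cast hsplit
      nlinarith [mul_le_mul_of_nonneg_right hδ₀δ (Nat.cast_nonneg n1),
        mul_le_mul_of_nonneg_right hδ₀δ' (Nat.cast_nonneg n2), Nat.cast_nonneg (α := ℝ) N]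
    · -- n1 < i₀, so n2 ≥ N - i₀ is large
      push_neg at h1
      have h2' : N ≤ n2 + i₀ := by omega
      rw [add_comm]
      refine lt_of_lt_of_le (wb_add_lt_add_of_lt_of_le (hq _ h2) (hpA' m' h1)) ?_
      rw [WithBot.coe_le_coe]
      have hc : (N : ℝ) ≤ (n2 : ℝ) + (i₀ : ℝ) := by exact_mod_cast h2'
      have hNK' : (K : ℝ) ≤ (N : ℝ) := by exact_mod_cast hNK
      nlinarith [mul_le_mul_of_nonneg_right hδ₀δ' (Nat.cast_nonneg (α := ℝ) n2)]
  · -- n2 < i₀', so n1 ≥ N - i₀' is large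
    push_neg at h2
    have h1 : i₀ ≤ n1 := by omega
    have h1' : N ≤ n1 + i₀' := by omega
    refine lt_of_lt_of_le (wb_add_lt_add_of_lt_of_le (hp m' h1) (hqA _ h2)) ?_
    rw [WithBot.coe_le_coe]
    have hc : (N : ℝ) ≤ (n1 : ℝ) + (i₀' : ℝ) := by exact_mod_cast h1'
    have hNK' : (K : ℝ) ≤ (N : ℝ) := by exact_mod_cast hNK
    nlinarith [mul_le_mul_of_nonneg_right hδ₀δ (Nat.cast_nonneg (α := ℝ) n1)]
end

section
/- Negligible convolution products, first part (Lemma "negligible-terms" of the paper, part (i), in normalized form): Fix an integer r ≥ 1 and ε ∈ {0,1}^r ∖ {0}. Let (c_m)_{m∈ℕ^r} be a family in R whose weights tend to −∞ in the directed sense: for every A ∈ ℤ there exists m₀ ∈ ℕ^r such that w(c_{m'}) < A for every m' ∈ ℕ^r with m' ≰ m₀. Let ℓ ∈ R be an element with w(ℓ) ≤ −1. Then for every A ∈ ℤ there exists N ∈ ℕ such that for every m ∈ ℕ^r with min_{1≤α≤r} m_α ≥ N one has w( Σ_{m' ≤ m} c_{m'}·ℓ^{⟨ε, m−m'⟩}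 ) < A; that is, the sums Σ_{m' ≤ m} c_{m'}·ℓ^{⟨ε, m−m'⟩} tend to zero in the weight topology as min_α m_α → ∞. -/
open Finset

lemma weightR_lt_intCast {R : Type*} (w : R → WithBot ℤ) (x : R) (A : ℤ) :
    weightR w x < ((A : ℝ) : WithBot ℝ) ↔ w x < (A : WithBot ℤ) := by
  unfold weightR
  cases h : w x with
  | bot => simp
  | coe n => simp [WithBot.map_coe, WithBot.coe_lt_coe]

lemma weightR_le_neg_one {R : Type*} (w : R → WithBot ℤ) (x : R) :
    weightR w x ≤ ((-1 : ℝ) : WithBot ℝ) ↔ w x ≤ ((-1 : ℤ) : WithBot ℤ) := by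
  unfold weightR
  cases h : w x with
  | bot => simp
  | coe n =>
    simp only [WithBot.map_coe, WithBot.coe_le_coe]
    exact_mod_cast Iff.rfl

lemma w_sum_le {R : Type*} [AddCommMonoid R] {ι : Type*} (w : R → WithBot ℤ)
    (hw0 : w 0 = ⊥) (hwadd : ∀ x y : R, w (x + y) ≤ max (w x) (w y))
    (s : Finset ι) (f : ι → R) :
    w (∑ i ∈ s, f i) ≤ s.sup (fun i => w (f i)) := by
  induction s using Finset.cons_induction with
  | empty => simp [hw0]
  | cons a s ha ih =>
    rw [Finset.sum_cons, Finset.sup_cons]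
    exact (hwadd _ _).trans (max_le_max le_rfl ih)

lemma w_pow_le {R : Type*} [Monoid R] (w : R → WithBot ℤ)
    (hwmul : ∀ x y : R, w (x * y) ≤ w x + w y)
    (ℓ : R) (hℓ : w ℓ ≤ ((-1 : ℤ) : WithBot ℤ)) :
    ∀ k : ℕ, 1 ≤ k → w (ℓ ^ k) ≤ ((-(k : ℤ) : ℤ) : WithBot ℤ) := by
  intro k hk
  induction k with
  | zero => omega
  | succ n ih =>
    rcases Nat.eq_zero_or_pos n with h0 | h1
    · subst h0; simpa using hℓ
    · have h2 : w (ℓ ^ (n + 1)) ≤ w (ℓ ^ n) + w ℓ := by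
        rw [pow_succ]; exact hwmul _ _
      refine h2.trans ?_
      calc w (ℓ ^ n) + w ℓ ≤ ((-(n : ℤ) : ℤ) : WithBot ℤ) + ((-1 : ℤ) : WithBot ℤ) :=
            add_le_add (ih h1) hℓ
        _ = ((-((n : ℤ) + 1) : ℤ) : WithBot ℤ) := by
            rw [← WithBot.coe_add]; ring_nf
        _ = ((-(((n : ℕ) + 1 : ℕ) : ℤ) : ℤ) : WithBot ℤ) := by push_cast; ring_nf

theorem negligible_convolution_products_tendsto_zero
    {R : Type*} [CommRing R] (w : R → WithBot ℤ)
    (hw0 : w 0 = ⊥)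
    (hwadd : ∀ x y : R, w (x + y) ≤ max (w x) (w y))
    (hwmul : ∀ x y : R, w (x * y) ≤ w x + w y)
    (r : ℕ) (hr : 1 ≤ r) (ε : Fin r → ℕ) (hε1 : ∀ α, ε α ≤ 1) (hε0 : ε ≠ 0)
    (c : (Fin r → ℕ) → R)
    (hc : ∀ A : ℤ, ∃ m₀ : Fin r → ℕ, ∀ m' : Fin r → ℕ, ¬ m' ≤ m₀ →
      weightR w (c m') < ((A : ℝ) : WithBot ℝ))
    (ℓ : R) (hℓ : weightR w ℓ ≤ ((-1 : ℝ) : WithBot ℝ)) :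
    ∀ A : ℤ, ∃ N : ℕ, ∀ m : Fin r → ℕ, (∀ α, N ≤ m α) →
      weightR w (∑ m' ∈ Finset.Iic m, c m' * ℓ ^ pairing ε (m - m')) <
        ((A : ℝ) : WithBot ℝ) := by
  have hℓ' : w ℓ ≤ ((-1 : ℤ) : WithBot ℤ) := (weightR_le_neg_one w ℓ).mp hℓ
  obtain ⟨α₀, hα₀⟩ : ∃ α, ε α = 1 := by
    obtain ⟨α, hα⟩ := Function.ne_iff.mp hε0
    exact ⟨α, by have := hε1 α; simp only [Pi.zero_apply] at hα; omega⟩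
  have hpow := w_pow_le w hwmul ℓ hℓ'
  intro A
  obtain ⟨m₀, hm₀⟩ := hc A
  set B : WithBot ℤ := (Finset.Iic m₀).sup (fun m' => w (c m')) with hB
  set b : ℤ := WithBot.unbotD A B with hb
  refine ⟨m₀ α₀ + ((b - A).toNat + 1), fun m hm => ?_⟩
  rw [weightR_lt_intCast]
  refine lt_of_le_of_lt (w_sum_le w hw0 hwadd _ _) ?_
  rw [Finset.sup_lt_iff (WithBot.bot_lt_coe A)]
  intro m' hm'
  have hpair : (m - m') α₀ ≤ pairing ε (m - m') := by
    have := Finset.single_le_sum (f := fun α => ε α * (m - m') α)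
      (fun i _ => Nat.zero_le _) (Finset.mem_univ α₀)
    simpa [pairing, hα₀] using this
  by_cases hcase : m' ≤ m₀
  · -- bounded part
    set k := pairing ε (m - m') with hk
    have hm'le : m' ≤ m := Finset.mem_Iic.mp hm'
    have hk1 : (b - A).toNat + 1 ≤ k := by
      have h1 : m₀ α₀ + ((b - A).toNat + 1) ≤ m α₀ := hm α₀
      have h2 : m' α₀ ≤ m₀ α₀ := hcase α₀
      have h3 : (m - m') α₀ = m α₀ - m' α₀ := rfl
      omega
    have hwB : w (c m') ≤ B := by
      rw [hB]
      exact Finset.le_sup (f := fun m' => w (c m')) (Finset.mem_Iic.mpr hcase)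
    have hterm : w (c m' * ℓ ^ k) ≤ B + ((-(k : ℤ) : ℤ) : WithBot ℤ) :=
      (hwmul _ _).trans (add_le_add hwB (hpow k (by omega)))
    refine hterm.trans_lt ?_
    cases hBc : B with
    | bot => simp
    | coe b0 =>
      have hbb : b = b0 := by rw [hb, hBc]; rfl
      rw [← WithBot.coe_add, WithBot.coe_lt_coe]
      have : (b0 - A).toNat + 1 ≤ k := by rw [← hbb]; exact hk1
      omega
  · -- negligible part
    have hcA : w (c m') < (A : WithBot ℤ) := (weightR_lt_intCast w _ A).mp (hm₀ m' hcase)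
    rcases Nat.eq_zero_or_pos (pairing ε (m - m')) with h0 | h1
    · rw [h0, pow_zero, mul_one]; exact hcA
    · have hterm : w (c m' * ℓ ^ pairing ε (m - m')) ≤ w (c m') + 0 := by
        refine (hwmul _ _).trans (add_le_add_right ?_ _)
        refine (hpow _ h1).trans ?_
        exact_mod_cast WithBot.coe_le_coe.mpr (by omega : -(pairing ε (m - m') : ℤ) ≤ 0)
      rw [add_zero] at hterm
      exact hterm.trans_lt hcA
end
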